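/- arXiv:0704.2777 — 2 statements merged into one kernel-verified Lean document; each statement's English description precedes it below -/
import Mathlib

section
/- The four subspaces V₁ ∩ W₁, V₁ ∩ W₂, V₂ ∩ W₁, V₂ ∩ W₂ form an independent family (their pairwise and mutual intersections are trivial in the sense of an internal direct sum), and F(1) = (V₁ ∩ W₁) ⊕ (V₁ ∩ W₂) ⊕ (V₂ ∩ W₁) ⊕ (V₂ ∩ W₂). -/
open Submodule

/-- The increasing sequence of subspaces `F(n)`:
`F(0) = ⊥`, `F(n+1) = Σ_{i,j} (F(n) + Vᵢ) ⊓ (F(n) + Wⱼ)`. -/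
noncomputable def Fseq {K E : Type*} [Field K] [AddCommGroup E] [Module K E]
    (V W : Fin 2 → Submodule K E) : ℕ → Submodule K E
  | 0 => ⊥
  | n + 1 => ⨆ i : Fin 2, ⨆ j : Fin 2, (Fseq V W n ⊔ V i) ⊓ (Fseq V W n ⊔ W j)

lemma helper_disj {K E : Type*} [Field K] [AddCommGroup E] [Module K E]
    {A A' B B' : Submodule K E} (hA : Disjoint A A') (hB : Disjoint B B') :
    Disjoint (A ⊓ B) ((A ⊓ B') ⊔ A') := by
  rw [disjoint_def]
  rintro x ⟨hxA, hxB⟩ hx'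
  obtain ⟨a, ha, v, hv, rfl⟩ := Submodule.mem_sup.mp hx'
  have hvA : v ∈ A := by
    have : (a + v) - a ∈ A := sub_mem hxA ha.1
    simpa using this
  have hv0 : v = 0 := Submodule.disjoint_def.mp hA v hvA hv
  subst hv0
  have ha0 : a = 0 := Submodule.disjoint_def.mp hB a (by simpa using hxB) ha.2
  simp [ha0]

/-- The four subspaces `Vᵢ ⊓ Wⱼ` form an independent family and
`F(1)` is their (internal direct) sum. -/
theorem stmt0 {K E : Type*} [Field K] [AddCommGroup E] [Module K E]
    [FiniteDimensional K E] (hchar : (2 : K) ≠ 0)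
    (V W : Fin 2 → Submodule K E)
    (hV : IsCompl (V 0) (V 1)) (hW : IsCompl (W 0) (W 1)) :
    iSupIndep (fun p : Fin 2 × Fin 2 => V p.1 ⊓ W p.2) ∧
      Fseq V W 1 = ⨆ p : Fin 2 × Fin 2, V p.1 ⊓ W p.2 := by
  constructor
  · intro p
    fin_cases p
    · exact (helper_disj hV.disjoint hW.disjoint).mono_right
        (iSup_le fun q => iSup_le fun hq => by
          fin_cases q
          · exact absurd rfl hq
          · exact le_sup_left
          · exact inf_le_left.trans le_sup_right
          · exact inf_le_left.trans le_sup_right)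
    · exact (helper_disj hV.disjoint hW.disjoint.symm).mono_right
        (iSup_le fun q => iSup_le fun hq => by
          fin_cases q
          · exact le_sup_left
          · exact absurd rfl hq
          · exact inf_le_left.trans le_sup_right
          · exact inf_le_left.trans le_sup_right)
    · exact (helper_disj hV.disjoint.symm hW.disjoint).mono_right
        (iSup_le fun q => iSup_le fun hq => by
          fin_cases q
          · exact inf_le_left.trans le_sup_right
          · exact inf_le_left.trans le_sup_right
          · exact absurd rfl hq
          · exact le_sup_left)
    · exact (helper_disj hV.disjoint.symm hW.disjoint.symm).mono_right
        (iSup_le fun q => iSup_le fun hq => by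
          fin_cases q
          · exact inf_le_left.trans le_sup_right
          · exact inf_le_left.trans le_sup_right
          · exact le_sup_left
          · exact absurd rfl hq)
  · rw [iSup_prod]
    simp [Fseq]
end

section
/- For every non-negative integer n, the kernel of θⁿ equals F(n). -/
open Submodule

/-- The projection onto `A` along a complement `B`, as an endomorphism of `E`. -/
noncomputable def projAlong {K E : Type*} [Field K] [AddCommGroup E] [Module K E]
    (A B : Submodule K E) (h : IsCompl A B) : E →ₗ[K] E :=
  A.subtype ∘ₗ A.linearProjOfIsCompl B h

/-- `θ = p_{W₁}^{W₂} ∘ p_{V₁}^{V₂} − p_{V₁}^{V₂} ∘ p_{W₁}^{W₂}`. -/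
noncomputable def theta {K E : Type*} [Field K] [AddCommGroup E] [Module K E]
    (V W : Fin 2 → Submodule K E)
    (hV : IsCompl (V 0) (V 1)) (hW : IsCompl (W 0) (W 1)) : Module.End K E :=
  projAlong (W 0) (W 1) hW ∘ₗ projAlong (V 0) (V 1) hV -
    projAlong (V 0) (V 1) hV ∘ₗ projAlong (W 0) (W 1) hW

section Aux

variable {K E : Type*} [Field K] [AddCommGroup E] [Module K E]

lemma fin2_cases (i : Fin 2) : i = 0 ∨ i = 1 := by
  omega

lemma projAlong_mem (A B : Submodule K E) (h : IsCompl A B) (x : E) :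
    projAlong A B h x ∈ A :=
  (A.linearProjOfIsCompl B h x).2

lemma sub_projAlong_mem (A B : Submodule K E) (h : IsCompl A B) (x : E) :
    x - projAlong A B h x ∈ B := by
  have hsum := Submodule.projection_add_projection_eq_self h x
  have hx : x - projAlong A B h x = (B.linearProjOfIsCompl A h.symm x : E) :=
    sub_eq_of_eq_add' hsum.symm
  rw [hx]
  exact (B.linearProjOfIsCompl A h.symm x).2

lemma projAlong_eq_self (A B : Submodule K E) (h : IsCompl A B) {x : E} (hx : x ∈ A) :
    projAlong A B h x = x := by
  exact
    congrArg (A.subtype) (Submodule.projectionOnto_apply_left h ⟨x, hx⟩)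

lemma projAlong_eq_zero (A B : Submodule K E) (h : IsCompl A B) {x : E} (hx : x ∈ B) :
    projAlong A B h x = 0 := by
  simp [projAlong, Submodule.projectionOnto_apply_of_mem_right h hx]
  exact Submodule.projectionOnto_apply_of_mem_right h hx

lemma projAlong_idem (A B : Submodule K E) (h : IsCompl A B) (x : E) :
    projAlong A B h (projAlong A B h x) = projAlong A B h x :=
  projAlong_eq_self A B h (projAlong_mem A B h x)

variable (V W : Fin 2 → Submodule K E)
variable (hV : IsCompl (V 0) (V 1)) (hW : IsCompl (W 0) (W 1))

lemma theta_apply (x : E) :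
    theta V W hV hW x =
      projAlong (W 0) (W 1) hW (projAlong (V 0) (V 1) hV x) -
        projAlong (V 0) (V 1) hV (projAlong (W 0) (W 1) hW x) := by
  simp [theta]

lemma theta_mem_V0 {v : E} (hv : v ∈ V 0) : theta V W hV hW v ∈ V 1 := by
  rw [theta_apply, projAlong_eq_self (V 0) (V 1) hV hv]
  exact sub_projAlong_mem (V 0) (V 1) hV _

lemma theta_mem_V1 {v : E} (hv : v ∈ V 1) : theta V W hV hW v ∈ V 0 := by
  rw [theta_apply, projAlong_eq_zero (V 0) (V 1) hV hv, map_zero, zero_sub]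
  exact neg_mem (projAlong_mem (V 0) (V 1) hV _)

lemma theta_mem_W0 {w : E} (hw : w ∈ W 0) : theta V W hV hW w ∈ W 1 := by
  rw [theta_apply, projAlong_eq_self (W 0) (W 1) hW hw]
  have he : projAlong (W 0) (W 1) hW (projAlong (V 0) (V 1) hV w) -
      projAlong (V 0) (V 1) hV w =
      -(projAlong (V 0) (V 1) hV w -
        projAlong (W 0) (W 1) hW (projAlong (V 0) (V 1) hV w)) := by abel
  rw [he]
  exact neg_mem (sub_projAlong_mem (W 0) (W 1) hW _)

lemma theta_mem_W1 {w : E} (hw : w ∈ W 1) : theta V W hV hW w ∈ W 0 := by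
  rw [theta_apply, projAlong_eq_zero (W 0) (W 1) hW hw, map_zero, sub_zero]
  exact projAlong_mem (W 0) (W 1) hW _

lemma mem_Fseq_succ {n : ℕ} (i j : Fin 2) {x : E}
    (h1 : x ∈ Fseq V W n ⊔ V i) (h2 : x ∈ Fseq V W n ⊔ W j) :
    x ∈ Fseq V W (n + 1) := by
  have hx : x ∈ (Fseq V W n ⊔ V i) ⊓ (Fseq V W n ⊔ W j) := ⟨h1, h2⟩
  have hle : (Fseq V W n ⊔ V i) ⊓ (Fseq V W n ⊔ W j) ≤ Fseq V W (n + 1) := by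
    show _ ≤ ⨆ i : Fin 2, ⨆ j : Fin 2, (Fseq V W n ⊔ V i) ⊓ (Fseq V W n ⊔ W j)
    exact le_iSup_of_le i (le_iSup_of_le j le_rfl)
  exact hle hx

lemma Fseq_mono {n : ℕ} : Fseq V W n ≤ Fseq V W (n + 1) := fun x hx =>
  mem_Fseq_succ V W 0 0 (mem_sup_left hx) (mem_sup_left hx)

lemma Fseq_succ_le {n : ℕ} (U : Submodule K E)
    (h : ∀ i j : Fin 2, (Fseq V W n ⊔ V i) ⊓ (Fseq V W n ⊔ W j) ≤ U) :
    Fseq V W (n + 1) ≤ U := by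
  show (⨆ i : Fin 2, ⨆ j : Fin 2, (Fseq V W n ⊔ V i) ⊓ (Fseq V W n ⊔ W j)) ≤ U
  exact iSup_le fun i => iSup_le fun j => h i j

/-- `F(n)` is invariant under `p = projAlong V₀ V₁`. -/
lemma projV_mem_Fseq : ∀ n : ℕ, ∀ x ∈ Fseq V W n,
    projAlong (V 0) (V 1) hV x ∈ Fseq V W n := by
  intro n
  induction n with
  | zero =>
    intro x hx
    simp only [Fseq, Submodule.mem_bot] at hx ⊢
    rw [hx, map_zero]
  | succ n ih =>
    have hle : Fseq V W (n + 1) ≤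
        comap (projAlong (V 0) (V 1) hV) (Fseq V W (n + 1)) := by
      apply Fseq_succ_le
      intro i j x hx
      obtain ⟨f, hf, v, hv, hfv⟩ := Submodule.mem_sup.mp hx.1
      have hv1 : v ∈ Fseq V W n ⊔ V i := mem_sup_right hv
      have hv2 : v ∈ Fseq V W n ⊔ W j := by
        have hveq : v = x - f := by rw [← hfv]; abel
        rw [hveq]
        exact sub_mem hx.2 (mem_sup_left hf)
      have hpf : projAlong (V 0) (V 1) hV f ∈ Fseq V W (n + 1) :=
        Fseq_mono V W (ih f hf)
      rw [mem_comap, ← hfv, map_add]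
      obtain rfl | rfl := fin2_cases i
      · rw [projAlong_eq_self (V 0) (V 1) hV hv]
        exact add_mem hpf (mem_Fseq_succ V W 0 j hv1 hv2)
      · rw [projAlong_eq_zero (V 0) (V 1) hV hv, add_zero]
        exact hpf
    intro x hx
    exact hle hx

/-- `F(n)` is invariant under `q = projAlong W₀ W₁`. -/
lemma projW_mem_Fseq : ∀ n : ℕ, ∀ x ∈ Fseq V W n,
    projAlong (W 0) (W 1) hW x ∈ Fseq V W n := by
  intro n
  induction n with
  | zero =>
    intro x hx
    simp only [Fseq, Submodule.mem_bot] at hx ⊢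
    rw [hx, map_zero]
  | succ n ih =>
    have hle : Fseq V W (n + 1) ≤
        comap (projAlong (W 0) (W 1) hW) (Fseq V W (n + 1)) := by
      apply Fseq_succ_le
      intro i j x hx
      obtain ⟨f, hf, w, hw, hfw⟩ := Submodule.mem_sup.mp hx.2
      have hw1 : w ∈ Fseq V W n ⊔ V i := by
        have hweq : w = x - f := by rw [← hfw]; abel
        rw [hweq]
        exact sub_mem hx.1 (mem_sup_left hf)
      have hw2 : w ∈ Fseq V W n ⊔ W j := mem_sup_right hw
      have hqf : projAlong (W 0) (W 1) hW f ∈ Fseq V W (n + 1) :=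
        Fseq_mono V W (ih f hf)
      rw [mem_comap, ← hfw, map_add]
      obtain rfl | rfl := fin2_cases j
      · rw [projAlong_eq_self (W 0) (W 1) hW hw]
        exact add_mem hqf (mem_Fseq_succ V W i 0 hw1 hw2)
      · rw [projAlong_eq_zero (W 0) (W 1) hW hw, add_zero]
        exact hqf
    intro x hx
    exact hle hx

/-- `θ` maps `F(n+1)` into `F(n)`. -/
lemma theta_Fseq_le : ∀ n : ℕ,
    Fseq V W (n + 1) ≤ comap (theta V W hV hW) (Fseq V W n) := by
  intro n
  induction n with
  | zero =>
    apply Fseq_succ_le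
    intro i j x hx
    have hxv : x ∈ V i := by
      have := hx.1
      simpa only [Fseq, bot_sup_eq, SetLike.mem_coe] using this
    have hxw : x ∈ W j := by
      have := hx.2
      simpa only [Fseq, bot_sup_eq, SetLike.mem_coe] using this
    rw [mem_comap]
    simp only [Fseq, Submodule.mem_bot]
    obtain rfl | rfl := fin2_cases i <;> obtain rfl | rfl := fin2_cases j
    · have hpx := projAlong_eq_self (V 0) (V 1) hV hxv
      have hqx := projAlong_eq_self (W 0) (W 1) hW hxw
      simp [theta_apply, hpx, hqx]
    · have hpx := projAlong_eq_self (V 0) (V 1) hV hxv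
      have hqx := projAlong_eq_zero (W 0) (W 1) hW hxw
      simp [theta_apply, hpx, hqx]
    · have hpx := projAlong_eq_zero (V 0) (V 1) hV hxv
      have hqx := projAlong_eq_self (W 0) (W 1) hW hxw
      simp [theta_apply, hpx, hqx]
    · have hpx := projAlong_eq_zero (V 0) (V 1) hV hxv
      have hqx := projAlong_eq_zero (W 0) (W 1) hW hxw
      simp [theta_apply, hpx, hqx]
  | succ n ih =>
    apply Fseq_succ_le
    intro i j x hx
    obtain ⟨f, hf, v, hv, hfv⟩ := Submodule.mem_sup.mp hx.1
    obtain ⟨g, hg, w, hw, hgw⟩ := Submodule.mem_sup.mp hx.2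
    rw [mem_comap]
    have hθf : theta V W hV hW f ∈ Fseq V W n := ih hf
    have hθg : theta V W hV hW g ∈ Fseq V W n := ih hg
    have hθx1 : theta V W hV hW x = theta V W hV hW f + theta V W hV hW v := by
      rw [← hfv, map_add]
    have hθx2 : theta V W hV hW x = theta V W hV hW g + theta V W hV hW w := by
      rw [← hgw, map_add]
    obtain rfl | rfl := fin2_cases i <;> obtain rfl | rfl := fin2_cases j
    · exact mem_Fseq_succ V W 1 1
        (hθx1 ▸ add_mem (mem_sup_left hθf) (mem_sup_right (theta_mem_V0 V W hV hW hv)))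
        (hθx2 ▸ add_mem (mem_sup_left hθg) (mem_sup_right (theta_mem_W0 V W hV hW hw)))
    · exact mem_Fseq_succ V W 1 0
        (hθx1 ▸ add_mem (mem_sup_left hθf) (mem_sup_right (theta_mem_V0 V W hV hW hv)))
        (hθx2 ▸ add_mem (mem_sup_left hθg) (mem_sup_right (theta_mem_W1 V W hV hW hw)))
    · exact mem_Fseq_succ V W 0 1
        (hθx1 ▸ add_mem (mem_sup_left hθf) (mem_sup_right (theta_mem_V1 V W hV hW hv)))
        (hθx2 ▸ add_mem (mem_sup_left hθg) (mem_sup_right (theta_mem_W0 V W hV hW hw)))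
    · exact mem_Fseq_succ V W 0 0
        (hθx1 ▸ add_mem (mem_sup_left hθf) (mem_sup_right (theta_mem_V1 V W hV hW hv)))
        (hθx2 ▸ add_mem (mem_sup_left hθg) (mem_sup_right (theta_mem_W1 V W hV hW hw)))

/-- The preimage of `F(n)` under `θ` is contained in `F(n+1)`. -/
lemma comap_theta_le (n : ℕ) :
    comap (theta V W hV hW) (Fseq V W n) ≤ Fseq V W (n + 1) := by
  intro x hx
  rw [mem_comap] at hx
  -- Notation: a = p x ∈ V₀, b = x - p x ∈ V₁.
  -- θ x = (q a - p (q a)) - p (q b)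
  have key : theta V W hV hW x =
      (projAlong (W 0) (W 1) hW (projAlong (V 0) (V 1) hV x)
        - projAlong (V 0) (V 1) hV
            (projAlong (W 0) (W 1) hW (projAlong (V 0) (V 1) hV x)))
      - projAlong (V 0) (V 1) hV
          (projAlong (W 0) (W 1) hW (x - projAlong (V 0) (V 1) hV x)) := by
    rw [theta_apply]
    have hsplit : projAlong (W 0) (W 1) hW x
        = projAlong (W 0) (W 1) hW (projAlong (V 0) (V 1) hV x)
          + projAlong (W 0) (W 1) hW (x - projAlong (V 0) (V 1) hV x) := by
      rw [← map_add]; congr 1; abel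
    rw [hsplit, map_add]
    abel
  -- p (q b) = - p (θ x) ∈ F(n)
  have hpθ : projAlong (V 0) (V 1) hV
        (projAlong (W 0) (W 1) hW (x - projAlong (V 0) (V 1) hV x))
      = - projAlong (V 0) (V 1) hV (theta V W hV hW x) := by
    rw [key]
    simp only [map_sub, projAlong_idem]
    abel
  have hpqb : projAlong (V 0) (V 1) hV
      (projAlong (W 0) (W 1) hW (x - projAlong (V 0) (V 1) hV x)) ∈ Fseq V W n := by
    rw [hpθ]
    exact neg_mem (projV_mem_Fseq V W hV n _ hx)
  -- q a - p (q a) ∈ F(n)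
  have hqa : projAlong (W 0) (W 1) hW (projAlong (V 0) (V 1) hV x)
      - projAlong (V 0) (V 1) hV
          (projAlong (W 0) (W 1) hW (projAlong (V 0) (V 1) hV x)) ∈ Fseq V W n := by
    have he : projAlong (W 0) (W 1) hW (projAlong (V 0) (V 1) hV x)
        - projAlong (V 0) (V 1) hV
            (projAlong (W 0) (W 1) hW (projAlong (V 0) (V 1) hV x))
        = theta V W hV hW x + projAlong (V 0) (V 1) hV
            (projAlong (W 0) (W 1) hW (x - projAlong (V 0) (V 1) hV x)) := by
      rw [key]; abel
    rw [he]
    exact add_mem hx hpqb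
  -- t₁ = q a ∈ (F ⊔ V₀) ⊓ (F ⊔ W₀)
  have ht1V : projAlong (W 0) (W 1) hW (projAlong (V 0) (V 1) hV x)
      ∈ Fseq V W n ⊔ V 0 := by
    have he : projAlong (W 0) (W 1) hW (projAlong (V 0) (V 1) hV x)
        - projAlong (V 0) (V 1) hV
            (projAlong (W 0) (W 1) hW (projAlong (V 0) (V 1) hV x))
        + projAlong (V 0) (V 1) hV
            (projAlong (W 0) (W 1) hW (projAlong (V 0) (V 1) hV x))
        = projAlong (W 0) (W 1) hW (projAlong (V 0) (V 1) hV x) := by abel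
    rw [← he]
    exact add_mem (mem_sup_left hqa)
      (mem_sup_right (projAlong_mem (V 0) (V 1) hV _))
  have ht1 : projAlong (W 0) (W 1) hW (projAlong (V 0) (V 1) hV x)
      ∈ Fseq V W (n + 1) :=
    mem_Fseq_succ V W 0 0 ht1V
      (mem_sup_right (projAlong_mem (W 0) (W 1) hW _))
  -- t₂ = a - q a ∈ (F ⊔ V₀) ⊓ (F ⊔ W₁)
  have ht2 : projAlong (V 0) (V 1) hV x
      - projAlong (W 0) (W 1) hW (projAlong (V 0) (V 1) hV x)
      ∈ Fseq V W (n + 1) :=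
    mem_Fseq_succ V W 0 1
      (sub_mem (mem_sup_right (projAlong_mem (V 0) (V 1) hV x)) ht1V)
      (mem_sup_right (sub_projAlong_mem (W 0) (W 1) hW _))
  -- t₃ = q b ∈ (F ⊔ V₁) ⊓ (F ⊔ W₀)
  have ht3V : projAlong (W 0) (W 1) hW (x - projAlong (V 0) (V 1) hV x)
      ∈ Fseq V W n ⊔ V 1 := by
    have he : projAlong (V 0) (V 1) hV
          (projAlong (W 0) (W 1) hW (x - projAlong (V 0) (V 1) hV x))
        + (projAlong (W 0) (W 1) hW (x - projAlong (V 0) (V 1) hV x)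
          - projAlong (V 0) (V 1) hV
              (projAlong (W 0) (W 1) hW (x - projAlong (V 0) (V 1) hV x)))
        = projAlong (W 0) (W 1) hW (x - projAlong (V 0) (V 1) hV x) := by abel
    rw [← he]
    exact add_mem (mem_sup_left hpqb)
      (mem_sup_right (sub_projAlong_mem (V 0) (V 1) hV _))
  have ht3 : projAlong (W 0) (W 1) hW (x - projAlong (V 0) (V 1) hV x)
      ∈ Fseq V W (n + 1) :=
    mem_Fseq_succ V W 1 0 ht3V
      (mem_sup_right (projAlong_mem (W 0) (W 1) hW _))
  -- t₄ = b - q b ∈ (F ⊔ V₁) ⊓ (F ⊔ W₁)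
  have ht4 : (x - projAlong (V 0) (V 1) hV x)
      - projAlong (W 0) (W 1) hW (x - projAlong (V 0) (V 1) hV x)
      ∈ Fseq V W (n + 1) :=
    mem_Fseq_succ V W 1 1
      (sub_mem (mem_sup_right (sub_projAlong_mem (V 0) (V 1) hV x)) ht3V)
      (mem_sup_right (sub_projAlong_mem (W 0) (W 1) hW _))
  -- x = t₁ + t₂ + t₃ + t₄
  have hfinal : x =
      projAlong (W 0) (W 1) hW (projAlong (V 0) (V 1) hV x)
      + (projAlong (V 0) (V 1) hV x
        - projAlong (W 0) (W 1) hW (projAlong (V 0) (V 1) hV x))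
      + (projAlong (W 0) (W 1) hW (x - projAlong (V 0) (V 1) hV x)
        + ((x - projAlong (V 0) (V 1) hV x)
          - projAlong (W 0) (W 1) hW (x - projAlong (V 0) (V 1) hV x))) := by
    abel
  rw [hfinal]
  exact add_mem (add_mem ht1 ht2) (add_mem ht3 ht4)

end Aux

/-- For every `n`, `ker θⁿ = F(n)`. -/
theorem stmt1 {K E : Type*} [Field K] [AddCommGroup E] [Module K E]
    [FiniteDimensional K E] (hchar : (2 : K) ≠ 0)
    (V W : Fin 2 → Submodule K E)
    (hV : IsCompl (V 0) (V 1)) (hW : IsCompl (W 0) (W 1)) :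
    ∀ n : ℕ, LinearMap.ker ((theta V W hV hW) ^ n) = Fseq V W n := by
  intro n
  induction n with
  | zero =>
    simp [Fseq, Module.End.one_eq_id]
  | succ n ih =>
    have hcomp : (theta V W hV hW) ^ (n + 1)
        = ((theta V W hV hW) ^ n) ∘ₗ theta V W hV hW := by
      rw [pow_succ]; rfl
    rw [hcomp, LinearMap.ker_comp, ih]
    exact le_antisymm (comap_theta_le V W hV hW n) (theta_Fseq_le V W hV hW n)
end
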